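/- Let β ∈ ℝ and let G be a finite simple graph with vertex set V and edge set E. Then there exist complex numbers a, b, c, d such that for every v : V → {0,1}, ∑_{h : E → {0,1}} exp( ∑_{{i,j}∈E} ( a − ln 2 + b·(v_i+v_j)·(2h_{\{i,j\}}−1) + c·(2h_{\{i,j\}}−1) + d·(v_i+v_j) ) ) = ∏_{{i,j}∈E} e^{−β·v_i·v_j/2}, i.e. the coherent thermal state wave function is exactly represented by an RBM with one hidden neuron per edge. -/

import Mathlib

open Complex Real Finset

set_option maxHeartbeats 1000000 in

/-- The coherent thermal state wave function `∏_{⟨i,j⟩∈E} e^{−β v_i v_j/2}` of the classical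
Ising model on a finite simple graph `G` is exactly represented by an RBM with one hidden
neuron per edge, with weights of the pairwise-interaction gadget form
`a − ln 2 + b(v_i+v_j)(2h−1) + c(2h−1) + d(v_i+v_j)`. -/
theorem coherent_thermal_state_RBM (β : ℝ) {V : Type*} [Fintype V] [DecidableEq V]
    (G : SimpleGraph V) [DecidableRel G.Adj] :
    ∃ a b c d : ℂ, ∀ v : V → Fin 2,
      ∑ h : G.edgeFinset → Fin 2, Complex.exp
          (∑ e : G.edgeFinset,
            Sym2.lift ⟨fun i j =>
                a - Real.log 2
                  + b * (((v i : ℕ) : ℂ) + ((v j : ℕ) : ℂ)) * (2 * ((h e : ℕ) : ℂ) - 1)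
                  + c * (2 * ((h e : ℕ) : ℂ) - 1) + d * (((v i : ℕ) : ℂ) + ((v j : ℕ) : ℂ)),
              fun i j => by dsimp only; ring⟩ (e : Sym2 V))
        = ∏ e ∈ G.edgeFinset,
            Sym2.lift ⟨fun i j => Complex.exp (-(β : ℂ) * ((v i : ℕ) : ℂ) * ((v j : ℕ) : ℂ) / 2),
              fun i j => by dsimp only; ring_nf⟩ e := by
  classical
  set t : ℂ := Complex.exp (-(β : ℂ) / 2) with htdef
  have ht : t ≠ 0 := Complex.exp_ne_zero _
  obtain ⟨s, hs⟩ := IsAlgClosed.exists_pow_nat_eq (t ^ 2 - 1) (n := 2) (by norm_num)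
  set q : ℂ := t + s with hqdef
  have hq1 : q * (t - s) = 1 := by rw [hqdef]; linear_combination -hs
  have hq0 : q ≠ 0 := left_ne_zero_of_mul_eq_one hq1
  obtain ⟨Y, hY⟩ := IsAlgClosed.exists_pow_nat_eq q (n := 2) (by norm_num)
  have hY0 : Y ≠ 0 := by
    intro h; apply hq0; rw [← hY, h]; ring
  obtain ⟨Z, hZ⟩ := IsAlgClosed.exists_pow_nat_eq (Complex.I / q) (n := 2) (by norm_num)
  have hZq : Z ^ 2 * q = Complex.I := by rw [hZ]; field_simp
  have hZ0 : Z ≠ 0 := by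
    intro h; rw [h] at hZq; simp at hZq; exact Complex.I_ne_zero hZq.symm
  have hIq : Complex.I + q ≠ 0 := by
    intro h
    have hqI : q = -Complex.I := by linear_combination h
    have hts : t - s = Complex.I := by
      linear_combination Complex.I * hq1 - Complex.I * (t - s) * hqI + (t - s) * Complex.I_sq
    apply ht
    rw [hqdef] at hqI
    linear_combination (1/2) * hts + (1/2) * hqI
  have h1I : (1 : ℂ) + Complex.I ≠ 0 := by
    intro h
    have := congrArg Complex.im h
    simp at this
  have hZ21 : Z ^ 2 + 1 ≠ 0 := by
    intro h; exact hIq (by linear_combination q * h - hZq)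
  obtain ⟨X, hXdef⟩ : ∃ x : ℂ, x = 2 * Z * q / (Complex.I + q) := ⟨_, rfl⟩
  obtain ⟨Wd, hWdef⟩ : ∃ x : ℂ, x = Y * (Z ^ 2 + 1) / (1 + Complex.I) := ⟨_, rfl⟩
  have hX0 : X ≠ 0 := by
    rw [hXdef]
    exact div_ne_zero (mul_ne_zero (mul_ne_zero two_ne_zero hZ0) hq0) hIq
  have hW0 : Wd ≠ 0 := by
    rw [hWdef]; exact div_ne_zero (mul_ne_zero hY0 hZ21) h1I
  have hXp : X * (Complex.I + q) = 2 * Z * q := by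
    rw [hXdef]; field_simp
  have hWp : Wd * (1 + Complex.I) = Y * (Z ^ 2 + 1) := by
    rw [hWdef]; field_simp
  have hq2t : q ^ 2 + 1 = 2 * t * q := by
    rw [hqdef]; linear_combination hs
  obtain ⟨la, hladef⟩ : ∃ x : ℂ, x = Complex.log X := ⟨_, rfl⟩
  obtain ⟨lb, hlbdef⟩ : ∃ x : ℂ, x = Complex.log Y := ⟨_, rfl⟩
  obtain ⟨lc, hlcdef⟩ : ∃ x : ℂ, x = Complex.log Z := ⟨_, rfl⟩
  obtain ⟨ld, hlddef⟩ : ∃ x : ℂ, x = Complex.log Wd := ⟨_, rfl⟩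
  have ha : Complex.exp la = X := by rw [hladef]; exact Complex.exp_log hX0
  have hb : Complex.exp lb = Y := by rw [hlbdef]; exact Complex.exp_log hY0
  have hc : Complex.exp lc = Z := by rw [hlcdef]; exact Complex.exp_log hZ0
  have hd : Complex.exp ld = Wd := by rw [hlddef]; exact Complex.exp_log hW0
  have e2 : ∀ w : ℂ, Complex.exp (w * 2) = (Complex.exp w) ^ 2 := fun w => by
    rw [show w * 2 = w + w by ring, Complex.exp_add, sq]
  -- per-edge identity
  have key : ∀ m n : Fin 2,
      (∑ k : Fin 2, Complex.exp (la - Real.log 2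
          + lb * (((m : ℕ) : ℂ) + ((n : ℕ) : ℂ)) * (2 * ((k : ℕ) : ℂ) - 1)
          + lc * (2 * ((k : ℕ) : ℂ) - 1) + ld * (((m : ℕ) : ℂ) + ((n : ℕ) : ℂ))))
        = Complex.exp (-(β : ℂ) * ((m : ℕ) : ℂ) * ((n : ℕ) : ℂ) / 2) := by
    intro m n
    fin_cases m <;> fin_cases n <;>
        simp only [Fin.sum_univ_two, Fin.isValue, Fin.val_zero, Fin.val_one,
          Nat.cast_zero, Nat.cast_one] <;>
        norm_num
    case _ =>
      simp only [Complex.exp_add, Complex.exp_sub, Complex.exp_neg, e2, ha, hb, hc, hd,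
        Complex.exp_log (two_ne_zero' ℂ)]
      field_simp
      refine mul_left_cancel₀ hq0 ?_
      linear_combination hXp + X * hZq
    case _ =>
      simp only [Complex.exp_add, Complex.exp_sub, Complex.exp_neg, e2, ha, hb, hc, hd,
        Complex.exp_log (two_ne_zero' ℂ)]
      field_simp
      refine mul_left_cancel₀ hq0 ?_
      linear_combination q * (X * Wd * Z ^ 2 * hY + X * Wd * hZq + X * hWp)
        + Y * (hXp + X * hZq)
    case _ =>
      simp only [Complex.exp_add, Complex.exp_sub, Complex.exp_neg, e2, ha, hb, hc, hd,
        Complex.exp_log (two_ne_zero' ℂ)]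
      field_simp
      refine mul_left_cancel₀ hq0 ?_
      linear_combination q * (X * Wd * Z ^ 2 * hY + X * Wd * hZq + X * hWp)
        + Y * (hXp + X * hZq)
    case _ =>
      simp only [Complex.exp_add, Complex.exp_sub, Complex.exp_neg, e2, ha, hb, hc, hd,
        Complex.exp_log (two_ne_zero' ℂ)]
      rw [← htdef]
      field_simp [hY0, hZ0]
      have h1 : X * (1 + Z ^ 2) = 2 * Z :=
        mul_left_cancel₀ hq0 (by linear_combination hXp + X * hZq)
      have hW2 : Wd ^ 2 * (2 * Complex.I) = Y ^ 2 * (Z ^ 2 + 1) ^ 2 := by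
        linear_combination (Wd * (1 + Complex.I) + Y * (Z ^ 2 + 1)) * hWp - Wd ^ 2 * Complex.I_sq
      refine mul_left_cancel₀ (show (2 * Complex.I : ℂ) ≠ 0 by simp) ?_
      linear_combination X * (1 + Y ^ 4 * Z ^ 2) * hW2
        + X * (Z ^ 2 + 1) ^ 2 * (1 + Y ^ 4 * Z ^ 2) * hY
        + X * q * (Z ^ 2 + 1) ^ 2 * Z ^ 2 * (Y ^ 2 + q) * hY
        - 4 * Complex.I * Z * t * hY
        + X * q * (Z ^ 2 + 1) ^ 2 * q * hZq
        + q * (Z ^ 2 + 1) * (1 + q * Complex.I) * h1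
        + 2 * Z * (1 + q * Complex.I) * hZq
        + 2 * Z * q * Complex.I_sq
        + 2 * Z * Complex.I * hq2t
  -- structural part
  refine ⟨la, lb, lc, ld, fun v => ?_⟩
  have step := Finset.prod_univ_sum (fun _ : G.edgeFinset => (Finset.univ : Finset (Fin 2)))
      (fun e k => Complex.exp (Sym2.lift ⟨fun i j =>
          la - Real.log 2 + lb * (((v i : ℕ) : ℂ) + ((v j : ℕ) : ℂ)) * (2 * ((k : ℕ) : ℂ) - 1)
          + lc * (2 * ((k : ℕ) : ℂ) - 1) + ld * (((v i : ℕ) : ℂ) + ((v j : ℕ) : ℂ)),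
        fun i j => by dsimp only; ring⟩ (e : Sym2 V)))
  rw [Fintype.piFinset_univ] at step
  simp only [Complex.exp_sum]
  rw [← step, ← Finset.prod_coe_sort G.edgeFinset]
  refine Finset.prod_congr rfl fun e _ => ?_
  obtain ⟨e, he⟩ := e
  induction e using Sym2.ind with
  | _ i j => simpa using key (v i) (v j)
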